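/- Let A be a domain over a field k, φ a nontrivial exponential map on A, x ∈ A of minimal positive φ-degree n, and c = Dⁿ(x) (the leading U-coefficient of φ(x)), which lies in A^φ. Then A is contained in the subring A^φ[c⁻¹][x] of Frac(A), i.e., every element of A is a polynomial in x with coefficients in the localization of A^φ at c. -/
import Mathlib


/-- An exponential map on a `k`-algebra `A`. -/
def IsExpMap {k A : Type*} [CommSemiring k] [CommRing A] [Algebra k A]
    (φ : A →ₐ[k] Polynomial A) : Prop :=
  (∀ a : A, (φ a).eval 0 = a) ∧
  (∀ a : A, (φ a).map φ.toRingHom =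
      Polynomial.eval₂ (Polynomial.C.comp Polynomial.C)
        (Polynomial.X + Polynomial.C Polynomial.X) (φ a))

open Polynomial

section Aux

variable {k A : Type*} [Field k] [CommRing A] [IsDomain A] [Algebra k A]
    (φ : A →ₐ[k] Polynomial A) (hφ : IsExpMap φ)

include hφ

theorem ExpAux.key (a : A) (i l : ℕ) :
    (φ ((φ a).coeff i)).coeff l = ((i+l).choose i : A) * (φ a).coeff (i+l) := by
  have h := congrArg (fun q : Polynomial (Polynomial A) => (q.coeff i).coeff l) (hφ.2 a)
  simp only [coeff_map] at h
  rw [show (φ ((φ a).coeff i)) = φ.toRingHom ((φ a).coeff i) from rfl, h]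
  rw [eval₂_eq_sum, Polynomial.sum, finset_sum_coeff, finset_sum_coeff]
  rw [Finset.sum_eq_single (i + l)]
  · simp only [RingHom.coe_comp, Function.comp_apply, coeff_C_mul, coeff_X_add_C_pow,
      coeff_mul_natCast, coeff_X_pow, Nat.add_sub_cancel_left]
    simp [mul_comm]
  · intro j _ hj
    simp only [RingHom.coe_comp, Function.comp_apply, coeff_C_mul, coeff_X_add_C_pow,
      coeff_mul_natCast, coeff_X_pow]
    rcases lt_or_ge j i with hji | hji
    · simp [Nat.choose_eq_zero_of_lt hji]
    · have : ¬ (l = j - i) := fun hh => hj (by omega)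
      simp [this]
  · intro hns
    simp [notMem_support_iff.mp hns]

theorem ExpAux.eq_zero {a : A} (h : φ a = 0) : a = 0 := by
  have := hφ.1 a
  rw [h, eval_zero] at this
  exact this.symm

theorem ExpAux.inv_of_deg0 {a : A} (h : (φ a).natDegree = 0) : φ a = C a := by
  have h1 := eq_C_of_natDegree_eq_zero h
  rw [h1, coeff_zero_eq_eval_zero, hφ.1 a]

theorem ExpAux.lead_inv (a : A) :
    φ ((φ a).coeff (φ a).natDegree) = C ((φ a).coeff (φ a).natDegree) := by
  ext l
  rw [ExpAux.key φ hφ, coeff_C]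
  rcases Nat.eq_zero_or_pos l with rfl | hl
  · simp
  · rw [if_neg (by omega), coeff_eq_zero_of_natDegree_lt (by omega), mul_zero]

theorem ExpAux.deg_coeff_eq {a : A} (ha : φ a ≠ 0) {l : ℕ} (hl : l ≤ (φ a).natDegree)
    (hch : ((((φ a).natDegree).choose l : A)) ≠ 0) :
    (φ ((φ a).coeff ((φ a).natDegree - l))).natDegree = l := by
  set m := (φ a).natDegree with hm
  have hcoeff : ∀ l' : ℕ, (φ ((φ a).coeff (m - l))).coeff l'
      = (((m - l) + l').choose (m - l) : A) * (φ a).coeff ((m - l) + l') :=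
    fun l' => ExpAux.key φ hφ a (m - l) l'
  apply le_antisymm
  · rw [natDegree_le_iff_coeff_eq_zero]
    intro j hj
    rw [hcoeff j, coeff_eq_zero_of_natDegree_lt (by omega), mul_zero]
  · apply le_natDegree_of_ne_zero
    rw [hcoeff l]
    have h1 : m - l + l = m := Nat.sub_add_cancel hl
    rw [h1, Nat.choose_symm hl]
    exact mul_ne_zero hch (by rw [hm, coeff_natDegree]; exact leadingCoeff_ne_zero.mpr ha)

end Aux

theorem ExpAux.NL1 (p : ℕ) [Fact p.Prime] : ∀ (t m : ℕ), p ^ t ∣ m →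
    Nat.choose m (p ^ t) ≡ m / p ^ t [MOD p] := by
  intro t
  induction t with
  | zero => intro m _; simpa using Nat.ModEq.refl m
  | succ t ih =>
    intro m hdvd
    have hp : 0 < p := (Fact.out : p.Prime).pos
    have h1 : p ^ (t + 1) % p = 0 := by
      rw [pow_succ]; exact Nat.mul_mod_left _ _
    have h2 : p ^ (t + 1) / p = p ^ t := by
      rw [pow_succ]; exact Nat.mul_div_cancel _ hp
    have h3 : p ^ t ∣ m / p := by
      obtain ⟨u, rfl⟩ := hdvd
      rw [pow_succ, mul_assoc, mul_comm p u, ← mul_assoc]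
      exact ⟨u, by rw [Nat.mul_div_cancel _ hp]⟩
    calc Nat.choose m (p ^ (t+1))
        ≡ Nat.choose (m % p) (p ^ (t+1) % p) * Nat.choose (m / p) (p ^ (t+1) / p) [MOD p] :=
          Choose.choose_modEq_choose_mod_mul_choose_div_nat
      _ = Nat.choose (m / p) (p ^ t) := by rw [h1, h2, Nat.choose_zero_right, one_mul]
      _ ≡ m / p / p ^ t [MOD p] := ih _ h3
      _ = m / p ^ (t + 1) := by rw [Nat.div_div_eq_div_mul, ← pow_succ']

theorem ExpAux.NL {p : ℕ} (hp : p.Prime) {m : ℕ} (hm : m ≠ 0) :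
    ¬ p ∣ m.choose (p ^ (m.factorization p)) := by
  haveI : Fact p.Prime := ⟨hp⟩
  set t := m.factorization p with ht
  have h1 : p ^ t ∣ m := Nat.ordProj_dvd m p
  have h2 : ¬ p ∣ m / p ^ t := by
    intro hdvd
    have : p ^ (t + 1) ∣ m := by
      obtain ⟨u, hu⟩ := hdvd
      exact ⟨u, by rw [pow_succ, mul_assoc, ← hu, Nat.mul_div_cancel' h1]⟩
    exact Nat.pow_succ_factorization_not_dvd hm hp this
  have h3 := ExpAux.NL1 p t m h1
  intro hdvd
  exact h2 (Nat.modEq_zero_iff_dvd.mp (h3.symm.trans (Nat.modEq_zero_iff_dvd.mpr hdvd)))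

section Main

variable {k A : Type*} [Field k] [CommRing A] [IsDomain A] [Algebra k A]
    (φ : A →ₐ[k] Polynomial A) (hφ : IsExpMap φ)
    (x : A) (hxpos : 0 < (φ x).natDegree)
    (hmin : ∀ a : A, φ a ≠ Polynomial.C a → (φ x).natDegree ≤ (φ a).natDegree)

include hφ hxpos hmin in
theorem ExpAux.dvd_deg : ∀ a : A, (φ x).natDegree ∣ (φ a).natDegree := by
  set n := (φ x).natDegree with hn
  -- minimal degree l of any nonzero-degree element is at least n
  have hminle : ∀ b : A, (φ b).natDegree ≠ 0 → n ≤ (φ b).natDegree := by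
    intro b hb
    refine hmin b fun hinv => hb ?_
    rw [hinv, natDegree_C]
  suffices H : ∀ m : ℕ, ∀ a : A, (φ a).natDegree = m → n ∣ m by
    intro a; exact H _ a rfl
  intro m
  induction m using Nat.strong_induction_on with
  | _ m ih =>
    intro a hm
    by_cases hdvd : n ∣ m
    · exact hdvd
    exfalso
    have hm0 : m ≠ 0 := fun h => hdvd (h ▸ dvd_zero n)
    have hφa : φ a ≠ 0 := fun h => hm0 (by rw [← hm, h, natDegree_zero])
    have hnm : n ≤ m := hm ▸ hminle a (hm ▸ hm0)
    -- From a degree-l coefficient with nonvanishing binomial, get contradictions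
    have helem : ∀ l : ℕ, l ≤ m → ((m.choose l : A)) ≠ 0 →
        ∃ b : A, (φ b).natDegree = l := by
      intro l hlm hch
      exact ⟨(φ a).coeff ((φ a).natDegree - l),
        by rw [ExpAux.deg_coeff_eq φ hφ hφa (hm ▸ hlm) (by rw [hm]; exact hch)]⟩
    have hlow : ∀ l : ℕ, 0 < l → l < m → ((m.choose l : A)) ≠ 0 → n ≤ l ∧ n ∣ l := by
      intro l hl hlm hch
      obtain ⟨b, hb⟩ := helem l (le_of_lt hlm) hch
      exact ⟨hb ▸ hminle b (by omega), ih l hlm b hb⟩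
    rcases CharP.char_is_prime_or_zero A (ringChar A) with hq | hq
    · -- positive characteristic p
      set p := ringChar A with hpdef
      haveI : CharP A p := ringChar.charP A
      have hcast : ∀ m' l' : ℕ, ¬ p ∣ m'.choose l' → ((m'.choose l' : A)) ≠ 0 := by
        intro m' l' h h0
        exact h ((CharP.cast_eq_zero_iff A p _).mp h0)
      -- Step 1 : n is a power of p
      have hx0 : (φ x).natDegree ≠ 0 := by omega
      have hφx : φ x ≠ 0 := fun h => hx0 (by rw [h, natDegree_zero])
      have hnpow : n = p ^ (n.factorization p) := by
        by_contra hne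
        set s := n.factorization p with hs
        have h1 : p ^ s ∣ n := Nat.ordProj_dvd n p
        have h2 : 0 < p ^ s := pow_pos hq.pos s
        have h3 : p ^ s < n := lt_of_le_of_ne (Nat.le_of_dvd (by omega) h1) (Ne.symm hne)
        have hch : ((n.choose (p ^ s) : A)) ≠ 0 :=
          hcast _ _ (ExpAux.NL hq (by omega))
        obtain ⟨b, hb⟩ : ∃ b : A, (φ b).natDegree = p ^ s :=
          ⟨(φ x).coeff ((φ x).natDegree - p ^ s),
            ExpAux.deg_coeff_eq φ hφ hφx (by omega) (by rw [← hn]; exact hch)⟩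
        have := hminle b (by omega)
        omega
      -- Step 2 : split on whether m is a power of p
      set t := m.factorization p with htdef
      by_cases hmp : m = p ^ t
      · rcases le_or_gt (n.factorization p) t with hst | hst
        · exact hdvd (hmp ▸ hnpow ▸ pow_dvd_pow p hst)
        · have : p ^ t < p ^ (n.factorization p) :=
            Nat.pow_lt_pow_right hq.one_lt hst
          omega
      · have h1 : p ^ t ∣ m := Nat.ordProj_dvd m p
        have h2 : 0 < p ^ t := pow_pos hq.pos t
        have h3 : p ^ t < m := lt_of_le_of_ne (Nat.le_of_dvd (by omega) h1) (Ne.symm hmp)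
        have hch : ((m.choose (p ^ t) : A)) ≠ 0 := hcast _ _ (ExpAux.NL hq hm0)
        have hch' : ((m.choose (m - p ^ t) : A)) ≠ 0 := by
          rw [Nat.choose_symm (le_of_lt h3)]; exact hch
        obtain ⟨-, hd1⟩ := hlow (p ^ t) h2 h3 hch
        obtain ⟨-, hd2⟩ := hlow (m - p ^ t) (by omega) (by omega) hch'
        have : n ∣ m := by
          have := Nat.dvd_add hd1 hd2
          rwa [Nat.add_sub_cancel' (le_of_lt h3)] at this
        exact hdvd this
    · -- characteristic zero
      haveI : CharP A 0 := hq ▸ ringChar.charP A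
      haveI : CharZero A := CharP.charP_to_charZero A
      have hl : 0 < m % n := Nat.pos_of_ne_zero fun h => hdvd (Nat.dvd_of_mod_eq_zero h)
      have hln : m % n < n := Nat.mod_lt _ (by omega)
      have hch : ((m.choose (m % n) : A)) ≠ 0 :=
        Nat.cast_ne_zero.mpr (Nat.choose_pos (by omega)).ne'
      obtain ⟨hle, -⟩ := hlow (m % n) hl (by omega) hch
      omega

end Main

/-- If `x` has minimal positive `φ`-degree `n` for a nontrivial exponential map `φ`
on a domain `A`, and `c = Dⁿ(x)` is the leading `U`-coefficient of `φ(x)`, then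
`A ⊆ A^φ[c⁻¹][x]`: every `a ∈ A` satisfies `cᴺ a = Σ bᵢ xⁱ` with all `bᵢ ∈ A^φ`. -/
theorem stmt_8 {k A : Type*} [Field k] [CommRing A] [IsDomain A] [Algebra k A]
    (φ : A →ₐ[k] Polynomial A) (hφ : IsExpMap φ)
    (hnontriv : ∃ a : A, φ a ≠ Polynomial.C a)
    (x : A) (hxpos : 0 < (φ x).natDegree)
    (hmin : ∀ a : A, φ a ≠ Polynomial.C a → (φ x).natDegree ≤ (φ a).natDegree)
    (c : A) (hc : c = (φ x).coeff (φ x).natDegree) :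
    ∀ a : A, ∃ (N : ℕ) (q : Polynomial A),
      (∀ i, φ (q.coeff i) = Polynomial.C (q.coeff i)) ∧ c ^ N * a = q.eval x := by
  set n := (φ x).natDegree with hn
  have hcinv : φ c = C c := hc ▸ ExpAux.lead_inv φ hφ x
  suffices H : ∀ m : ℕ, ∀ a : A, (φ a).natDegree = m →
      ∃ (N : ℕ) (q : Polynomial A),
        (∀ i, φ (q.coeff i) = Polynomial.C (q.coeff i)) ∧ c ^ N * a = q.eval x by
    intro a; exact H _ a rfl
  intro m
  induction m using Nat.strong_induction_on with
  | _ m ih =>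
    intro a hm
    by_cases hinv : φ a = C a
    · refine ⟨0, C a, fun i => ?_, by simp⟩
      rcases Nat.eq_zero_or_pos i with rfl | hi
      · simpa using hinv
      · rw [coeff_C, if_neg (by omega)]; simp
    -- non-invariant case
    have hm0 : m ≠ 0 := fun h =>
      hinv (ExpAux.inv_of_deg0 φ hφ (by rw [hm, h]))
    have hdvd : n ∣ m := hm ▸ ExpAux.dvd_deg φ hφ x hxpos hmin a
    obtain ⟨t, ht⟩ := hdvd
    set e := (φ a).coeff m with he
    have heinv : φ e = C e := by
      rw [he, show m = (φ a).natDegree from hm.symm]; exact ExpAux.lead_inv φ hφ a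
    set b := c ^ t * a - e * x ^ t with hb
    have hφb : φ b = C (c ^ t) * φ a - C e * (φ x) ^ t := by
      rw [hb, map_sub, map_mul, map_mul, map_pow, map_pow, hcinv, heinv, ← C_pow]
    have hdegxt : ((φ x) ^ t).natDegree = m := by
      rw [natDegree_pow, ← hn, ht, Nat.mul_comm]
    have hcoeffxt : ((φ x) ^ t).coeff m = c ^ t := by
      conv_lhs => rw [← hdegxt]
      rw [coeff_natDegree, leadingCoeff_pow, ← coeff_natDegree, ← hc]
    have hcoeffb : ∀ j, m ≤ j → (φ b).coeff j = 0 := by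
      intro j hj
      rcases eq_or_lt_of_le hj with rfl | hjlt
      · rw [hφb, coeff_sub, coeff_C_mul, coeff_C_mul, hcoeffxt, ← he]
        ring
      · rw [hφb, coeff_sub, coeff_C_mul, coeff_C_mul,
          coeff_eq_zero_of_natDegree_lt (hm ▸ hjlt),
          coeff_eq_zero_of_natDegree_lt (hdegxt ▸ hjlt)]
        ring
    by_cases hb0 : b = 0
    · refine ⟨t, C e * X ^ t, fun i => ?_, ?_⟩
      · rw [coeff_C_mul, coeff_X_pow]
        by_cases hit : i = t
        · simpa [hit] using heinv
        · simp [hit]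
      · have h0 : c ^ t * a = e * x ^ t := sub_eq_zero.mp (by rw [← hb]; exact hb0)
        rw [h0]; simp
    · have hφbne : φ b ≠ 0 := fun h => hb0 (ExpAux.eq_zero φ hφ h)
      have hdegb : (φ b).natDegree < m := by
        by_contra hge
        exact hφbne (leadingCoeff_eq_zero.mp (hcoeffb _ (by omega)))
      obtain ⟨N', q', hq'inv, hq'⟩ := ih _ hdegb b rfl
      refine ⟨N' + t, q' + C (c ^ N' * e) * X ^ t, fun i => ?_, ?_⟩
      · rw [coeff_add, coeff_C_mul, coeff_X_pow, map_add, hq'inv, map_mul, map_mul,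
          map_pow, hcinv, heinv]
        split_ifs with hit
        · simp [C_add, C_mul, C_pow]
        · simp [C_add, C_mul, C_pow]
      · have heval : (q' + C (c ^ N' * e) * X ^ t).eval x
            = q'.eval x + c ^ N' * e * x ^ t := by simp
        rw [heval, ← hq', hb]
        ring
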